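/- Fix a real s > 0. Then the proportion (1/N)·#{k ∈ ℤ : 1 ≤ k ≤ N − 1 and S_{N,−ε_N,δ_N}(k/N, s) < S_{N,ε_N,δ_N}(k/N, s)} tends to 0 as N → ∞. -/

import Mathlib

open scoped Classical

/-- `S N x0 s` counts the integers `1 ≤ n ≤ ⌊s·N⌋` whose fractional part of `√n`
lies in the arc `[x0 − 1/(2N), x0 + 1/(2N)) + ℤ`. -/
noncomputable def S (N : ℕ) (x0 s : ℝ) : ℕ :=
  ((Finset.Icc 1 ⌊s * (N : ℝ)⌋₊).filter (fun n : ℕ =>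
    ∃ m : ℤ, -(1 / (2 * (N : ℝ))) ≤ Real.sqrt n - x0 + m ∧
      Real.sqrt n - x0 + m < 1 / (2 * (N : ℝ)))).card

/-- `Sed N ε δ x0 s` counts the pairs `(m,n) ∈ ℤ²` with
`(x0 − m)/√N ∈ (−ε, √s + ε]` and `(√N·(n − (x0 − m)²) + δ)/((x0 − m)/√N) ∈ [−1, 1)`;
it is set to `0` when `x0 = 0`. -/
noncomputable def Sed (N : ℕ) (ε δ x0 s : ℝ) : ℕ :=
  if x0 = 0 then 0
  else
    Set.ncard {p : ℤ × ℤ |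
      (x0 - (p.1 : ℝ)) / Real.sqrt N ∈ Set.Ioc (-ε) (Real.sqrt s + ε) ∧
      (Real.sqrt N * ((p.2 : ℝ) - (x0 - (p.1 : ℝ)) ^ 2) + δ) /
          ((x0 - (p.1 : ℝ)) / Real.sqrt N) ∈ Set.Ico (-1 : ℝ) 1}

/-- `ε_N = 1/(2N·√⌊sN⌋) + |√⌊sN⌋/√N − √s|`. -/
noncomputable def epsN (N : ℕ) (s : ℝ) : ℝ :=
  1 / (2 * (N : ℝ) * Real.sqrt (⌊s * (N : ℝ)⌋₊ : ℝ)) +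
    |Real.sqrt (⌊s * (N : ℝ)⌋₊ : ℝ) / Real.sqrt N - Real.sqrt s|

/-- `δ_N = −1/(4N·√N)`. -/
noncomputable def deltaN (N : ℕ) : ℝ := -(1 / (4 * (N : ℝ) * Real.sqrt N))

/-! ### Auxiliary declarations -/

/-- The set of pairs counted by `Sed` (when `x0 ≠ 0`). -/
noncomputable def SedSet (N : ℕ) (ε δ x0 s : ℝ) : Set (ℤ × ℤ) :=
  {p : ℤ × ℤ |
    (x0 - (p.1 : ℝ)) / Real.sqrt N ∈ Set.Ioc (-ε) (Real.sqrt s + ε) ∧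
    (Real.sqrt N * ((p.2 : ℝ) - (x0 - (p.1 : ℝ)) ^ 2) + δ) /
        ((x0 - (p.1 : ℝ)) / Real.sqrt N) ∈ Set.Ico (-1 : ℝ) 1}

lemma Sed_eq_ncard {N : ℕ} {ε δ x0 s : ℝ} (hx : x0 ≠ 0) :
    Sed N ε δ x0 s = (SedSet N ε δ x0 s).ncard := by
  unfold Sed
  rw [if_neg hx]
  rfl

lemma SedSet_mono {N : ℕ} {ε₁ ε₂ δ x0 s : ℝ} (h : ε₁ ≤ ε₂) :
    SedSet N ε₁ δ x0 s ⊆ SedSet N ε₂ δ x0 s := by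
  intro p hp
  exact ⟨Set.Ioc_subset_Ioc (by linarith) (by linarith) hp.1, hp.2⟩

lemma SedSet_finite {N : ℕ} {ε δ x0 s : ℝ} (hN : 1 ≤ N)
    (hx : ∀ m : ℤ, x0 ≠ (m : ℝ)) (hε : |ε| ≤ 1) :
    (SedSet N ε δ x0 s).Finite := by
  have hN0 : (1:ℝ) ≤ (N:ℝ) := by exact_mod_cast hN
  have hsqN : (1:ℝ) ≤ Real.sqrt N := by
    rw [show (1:ℝ) = Real.sqrt 1 by simp]
    exact Real.sqrt_le_sqrt hN0
  have hsqN0 : (0:ℝ) < Real.sqrt N := lt_of_lt_of_le one_pos hsqN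
  have hs0 : (0:ℝ) ≤ Real.sqrt s := Real.sqrt_nonneg s
  set B1 : ℝ := |x0| + (Real.sqrt s + 1) * Real.sqrt N with hB1
  set B2 : ℝ := (Real.sqrt s + 1)^2 * N + (Real.sqrt s + 1 + |δ|) with hB2
  apply Set.Finite.subset ((Set.finite_Icc (-⌈B1⌉) ⌈B1⌉).prod (Set.finite_Icc (-⌈B2⌉) ⌈B2⌉))
  rintro ⟨m, n⟩ ⟨h1, h2⟩
  simp only [Set.mem_Ioc] at h1
  simp only [Set.mem_Ico] at h2
  obtain ⟨hε1, hε2⟩ := abs_le.mp hε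
  have hd : |(x0 - (m:ℝ)) / Real.sqrt N| ≤ Real.sqrt s + 1 := by
    rw [abs_le]; constructor
    · linarith [h1.1]
    · linarith [h1.2]
  have hxm : |x0 - (m:ℝ)| ≤ (Real.sqrt s + 1) * Real.sqrt N := by
    rw [abs_div, abs_of_pos hsqN0, div_le_iff₀ hsqN0] at hd
    exact hd
  have hm : |(m:ℝ)| ≤ B1 := by
    have h' := abs_add_le (x0 - (m:ℝ)) (-x0)
    rw [abs_neg, show (x0 - (m:ℝ)) + -x0 = -(m:ℝ) by ring, abs_neg] at h'
    rw [hB1]; linarith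
  have hdne : (x0 - (m:ℝ)) / Real.sqrt N ≠ 0 :=
    div_ne_zero (sub_ne_zero.mpr (hx m)) (ne_of_gt hsqN0)
  have hq : |(Real.sqrt N * ((n : ℝ) - (x0 - (m:ℝ)) ^ 2) + δ)| ≤ |(x0 - (m:ℝ)) / Real.sqrt N| := by
    have hq1 : |(Real.sqrt N * ((n : ℝ) - (x0 - (m:ℝ)) ^ 2) + δ) /
        ((x0 - (m:ℝ)) / Real.sqrt N)| ≤ 1 := abs_le.mpr ⟨h2.1, le_of_lt h2.2⟩
    rw [abs_div, div_le_one (abs_pos.mpr hdne)] at hq1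
    exact hq1
  have hnum : |Real.sqrt N * ((n : ℝ) - (x0 - (m:ℝ)) ^ 2)| ≤ Real.sqrt s + 1 + |δ| := by
    have h' := abs_add_le (Real.sqrt N * ((n : ℝ) - (x0 - (m:ℝ)) ^ 2) + δ) (-δ)
    rw [abs_neg, show (Real.sqrt N * ((n : ℝ) - (x0 - (m:ℝ)) ^ 2) + δ) + -δ
      = Real.sqrt N * ((n : ℝ) - (x0 - (m:ℝ)) ^ 2) by ring] at h'
    linarith [hq.trans hd]
  have hy : |(n : ℝ) - (x0 - (m:ℝ)) ^ 2| ≤ Real.sqrt s + 1 + |δ| := by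
    rw [abs_mul, abs_of_pos hsqN0] at hnum
    nlinarith [abs_nonneg ((n : ℝ) - (x0 - (m:ℝ)) ^ 2)]
  have hsq : (x0 - (m:ℝ))^2 ≤ (Real.sqrt s + 1)^2 * N := by
    have h1' : (x0 - (m:ℝ))^2 = |x0 - (m:ℝ)|^2 := (sq_abs _).symm
    have h2' : ((Real.sqrt s + 1) * Real.sqrt N)^2 = (Real.sqrt s + 1)^2 * N := by
      rw [mul_pow, Real.sq_sqrt (by positivity : (0:ℝ) ≤ (N:ℝ))]
    nlinarith [abs_nonneg (x0 - (m:ℝ))]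
  have hn : |(n:ℝ)| ≤ B2 := by
    have h' := abs_add_le ((n : ℝ) - (x0 - (m:ℝ)) ^ 2) ((x0 - (m:ℝ)) ^ 2)
    rw [show ((n : ℝ) - (x0 - (m:ℝ)) ^ 2) + (x0 - (m:ℝ)) ^ 2 = (n:ℝ) by ring,
      abs_of_nonneg (sq_nonneg (x0 - (m:ℝ)))] at h'
    rw [hB2]; linarith
  constructor
  · constructor
    · have : (-(⌈B1⌉:ℝ)) ≤ (m:ℝ) := by
        have := Int.le_ceil B1; linarith [neg_abs_le (m:ℝ)]
      exact_mod_cast (by push_cast; exact this : ((-⌈B1⌉ : ℤ):ℝ) ≤ (m:ℝ))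
    · have : (m:ℝ) ≤ (⌈B1⌉:ℝ) := le_trans (le_abs_self _) (hm.trans (Int.le_ceil B1))
      exact_mod_cast this
  · constructor
    · have : (-(⌈B2⌉:ℝ)) ≤ (n:ℝ) := by
        have := Int.le_ceil B2; linarith [neg_abs_le (n:ℝ)]
      exact_mod_cast (by push_cast; exact this : ((-⌈B2⌉ : ℤ):ℝ) ≤ (n:ℝ))
    · have : (n:ℝ) ≤ (⌈B2⌉:ℝ) := le_trans (le_abs_self _) (hn.trans (Int.le_ceil B2))
      exact_mod_cast this

lemma epsN_nonneg (N : ℕ) (s : ℝ) : 0 ≤ epsN N s := by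
  unfold epsN; positivity

lemma epsN_le {N : ℕ} {s : ℝ} (hs : 0 < s) (hN : 1 ≤ N) (hsN : (1:ℝ) ≤ s * N) :
    epsN N s ≤ (1/2 + 1/Real.sqrt s) / N := by
  have hN0 : (0:ℝ) < (N:ℝ) := by exact_mod_cast hN
  have hfl : (1:ℝ) ≤ (⌊s * (N:ℝ)⌋₊ : ℝ) := by
    have : (1:ℕ) ≤ ⌊s * (N:ℝ)⌋₊ := Nat.le_floor (by exact_mod_cast hsN)
    exact_mod_cast this
  have hflle : (⌊s * (N:ℝ)⌋₊ : ℝ) ≤ s * N := Nat.floor_le (by positivity)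
  have hflgt : s * N - 1 < (⌊s * (N:ℝ)⌋₊ : ℝ) := by
    have := Nat.lt_floor_add_one (s * (N:ℝ)); linarith
  have hsqfl : (1:ℝ) ≤ Real.sqrt (⌊s * (N:ℝ)⌋₊ : ℝ) := by
    rw [show (1:ℝ) = Real.sqrt 1 by simp]
    exact Real.sqrt_le_sqrt hfl
  have hss : (0:ℝ) < Real.sqrt s := Real.sqrt_pos.mpr hs
  have term1 : 1 / (2 * (N : ℝ) * Real.sqrt (⌊s * (N : ℝ)⌋₊ : ℝ)) ≤ 1 / (2 * N) := by
    apply one_div_le_one_div_of_le (by positivity)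
    nlinarith
  have term2 : |Real.sqrt (⌊s * (N : ℝ)⌋₊ : ℝ) / Real.sqrt N - Real.sqrt s|
      ≤ 1 / (Real.sqrt s * N) := by
    set u : ℝ := (⌊s * (N:ℝ)⌋₊ : ℝ) / N with hu
    have hu0 : 0 ≤ u := by positivity
    have hdiv : Real.sqrt (⌊s * (N : ℝ)⌋₊ : ℝ) / Real.sqrt N = Real.sqrt u := by
      rw [hu, Real.sqrt_div (by positivity)]
    have hNinv : (1/(N:ℝ)) * N = 1 := by field_simp
    have h1 : u ≤ s := by rw [hu, div_le_iff₀ hN0]; linarith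
    have h2 : s - 1/N ≤ u := by
      rw [hu, le_div_iff₀ hN0]; nlinarith
    have hus : |u - s| ≤ 1 / N := by rw [abs_le]; constructor <;> linarith
    have key : |Real.sqrt u - Real.sqrt s| * (Real.sqrt u + Real.sqrt s) = |u - s| := by
      rw [← abs_of_nonneg (show (0:ℝ) ≤ Real.sqrt u + Real.sqrt s by positivity), ← abs_mul]
      congr 1
      have e1 := Real.sq_sqrt hu0
      have e2 := Real.sq_sqrt hs.le
      nlinarith [e1, e2]
    have step : |Real.sqrt u - Real.sqrt s| ≤ |u - s| / Real.sqrt s := by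
      rw [le_div_iff₀ hss]
      calc |Real.sqrt u - Real.sqrt s| * Real.sqrt s
          ≤ |Real.sqrt u - Real.sqrt s| * (Real.sqrt u + Real.sqrt s) := by
            apply mul_le_mul_of_nonneg_left _ (abs_nonneg _)
            nlinarith [Real.sqrt_nonneg u]
        _ = |u - s| := key
    rw [hdiv]
    calc |Real.sqrt u - Real.sqrt s| ≤ |u - s| / Real.sqrt s := step
      _ ≤ (1/N) / Real.sqrt s := by gcongr
      _ = 1 / (Real.sqrt s * N) := by field_simp
  have heq : (1/2 + 1/Real.sqrt s) / (N:ℝ) = 1/(2*N) + 1/(Real.sqrt s * N) := by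
    field_simp
  rw [epsN, heq]
  linarith

lemma card_Ioc_floor_le {α β : ℝ} (h : α ≤ β) :
    ((Finset.Ioc ⌊α⌋ ⌊β⌋).card : ℝ) ≤ β - α + 1 := by
  have hfl : ⌊α⌋ ≤ ⌊β⌋ := Int.floor_le_floor h
  rw [Int.card_Ioc]
  rw [show ((⌊β⌋ - ⌊α⌋).toNat : ℝ) = (((⌊β⌋ - ⌊α⌋).toNat : ℤ) : ℝ) by push_cast; ring,
    Int.toNat_of_nonneg (sub_nonneg.mpr hfl)]
  push_cast
  linarith [Int.floor_le β, Int.sub_one_lt_floor α]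

set_option maxHeartbeats 1000000 in
theorem proportion_Sed_lt_Sed_tendsto_zero (s : ℝ) (hs : 0 < s) :
    Filter.Tendsto
      (fun N : ℕ =>
        (((Finset.Ico 1 N).filter (fun k : ℕ =>
          Sed N (-epsN N s) (deltaN N) ((k : ℝ) / N) s <
            Sed N (epsN N s) (deltaN N) ((k : ℝ) / N) s)).card : ℝ) / N)
      Filter.atTop (nhds 0) := by
  have hss : (0:ℝ) < Real.sqrt s := Real.sqrt_pos.mpr hs
  set c : ℝ := 1/2 + 1/Real.sqrt s with hc
  have hc0 : 0 < c := by rw [hc]; positivity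
  -- the dominating sequence tends to zero
  have hsqrt : Filter.Tendsto (fun N : ℕ => Real.sqrt N) Filter.atTop Filter.atTop := by
    rw [Filter.tendsto_atTop]
    intro b
    filter_upwards [Filter.eventually_ge_atTop ⌈b^2⌉₊] with N hN
    have h1 : b^2 ≤ (N:ℝ) := le_trans (Nat.le_ceil _) (by exact_mod_cast hN)
    calc b ≤ |b| := le_abs_self b
      _ = Real.sqrt (b^2) := (Real.sqrt_sq_eq_abs b).symm
      _ ≤ Real.sqrt N := Real.sqrt_le_sqrt h1
  have hNat : Filter.Tendsto (fun N : ℕ => ((N:ℝ))) Filter.atTop Filter.atTop :=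
    tendsto_natCast_atTop_atTop
  have hg : Filter.Tendsto (fun N : ℕ => 4*c*(Real.sqrt N)⁻¹ + 2*((N:ℝ))⁻¹)
      Filter.atTop (nhds 0) := by
    have h1 := hsqrt.inv_tendsto_atTop
    have h2 := hNat.inv_tendsto_atTop
    have h3 := (h1.const_mul (4*c)).add (h2.const_mul 2)
    simpa using h3
  apply squeeze_zero' (Filter.Eventually.of_forall fun N => by positivity) _ hg
  filter_upwards [Filter.eventually_ge_atTop 1, Filter.eventually_ge_atTop ⌈1/s⌉₊,
    Filter.eventually_ge_atTop ⌈c⌉₊] with N hN1 hNs hNc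
  have hN0 : (0:ℝ) < (N:ℝ) := by exact_mod_cast hN1
  have hsqN0 : (0:ℝ) < Real.sqrt N := Real.sqrt_pos.mpr hN0
  have hNN0 : (0:ℝ) < (N:ℝ) * Real.sqrt N := by positivity
  have hsN : (1:ℝ) ≤ s * N := by
    have h1 : (1/s : ℝ) ≤ N := le_trans (Nat.le_ceil _) (by exact_mod_cast hNs)
    rw [div_le_iff₀ hs] at h1
    nlinarith
  have hcN : c / N ≤ 1 := by
    have h1 : (c:ℝ) ≤ N := le_trans (Nat.le_ceil _) (by exact_mod_cast hNc)
    rw [div_le_one hN0]; exact h1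
  set E := epsN N s with hEdef
  have hE0 : 0 ≤ E := epsN_nonneg N s
  have hEc : E ≤ c / N := epsN_le hs hN1 hsN
  have hE1 : |E| ≤ 1 := by rw [abs_of_nonneg hE0]; linarith
  have hnE1 : |(-E)| ≤ 1 := by rw [abs_neg]; exact hE1
  set A : ℝ := (N:ℝ) * Real.sqrt N * Real.sqrt s with hA
  set T : Finset ℤ :=
    Finset.Ioc ⌊-(c*Real.sqrt N)⌋ ⌊c*Real.sqrt N⌋ ∪
      Finset.Ioc ⌊A - c*Real.sqrt N⌋ ⌊A + c*Real.sqrt N⌋ with hT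
  set bad := (Finset.Ico 1 N).filter (fun k : ℕ =>
    Sed N (-E) (deltaN N) ((k : ℝ) / N) s < Sed N E (deltaN N) ((k : ℝ) / N) s) with hbad
  -- every bad `k` has a good residue
  have hPall : ∀ k ∈ bad, ∃ m : ℤ, (k:ℤ) - m * (N:ℤ) ∈ T := by
    intro k hk
    obtain ⟨hk1, hlt⟩ := Finset.mem_filter.mp hk
    rw [Finset.mem_Ico] at hk1
    set x0 : ℝ := (k:ℝ)/N with hx0def
    have hx0 : ∀ m : ℤ, x0 ≠ (m:ℝ) := by
      intro m hm
      rw [hx0def, div_eq_iff (ne_of_gt hN0)] at hm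
      have hkmZ : (k:ℤ) = m * (N:ℤ) := by exact_mod_cast hm
      have hk1' : (1:ℤ) ≤ (k:ℤ) := by exact_mod_cast hk1.1
      have hk2' : (k:ℤ) < (N:ℤ) := by exact_mod_cast hk1.2
      have hNZ : (1:ℤ) ≤ (N:ℤ) := by exact_mod_cast hN1
      rcases le_or_gt m 0 with hm0 | hm0
      · nlinarith
      · have hm1 : (1:ℤ) ≤ m := hm0
        nlinarith
    have hx00 : x0 ≠ 0 := by
      intro h
      exact hx0 0 (by simpa using h)
    rw [Sed_eq_ncard hx00, Sed_eq_ncard hx00] at hlt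
    have hsub : SedSet N (-E) (deltaN N) x0 s ⊆ SedSet N E (deltaN N) x0 s :=
      SedSet_mono (by linarith)
    have hwit : ∃ p, p ∈ SedSet N E (deltaN N) x0 s ∧ p ∉ SedSet N (-E) (deltaN N) x0 s := by
      by_contra hcon
      push_neg at hcon
      have heq : SedSet N E (deltaN N) x0 s = SedSet N (-E) (deltaN N) x0 s :=
        Set.Subset.antisymm hcon hsub
      rw [heq] at hlt
      exact lt_irrefl _ hlt
    obtain ⟨⟨m, n⟩, hp, hnp⟩ := hwit
    refine ⟨m, ?_⟩
    obtain ⟨hd1, hd2⟩ := hp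
    have hnc : (x0 - (m:ℝ))/Real.sqrt N ∉ Set.Ioc (-(-E)) (Real.sqrt s + -E) :=
      fun h => hnp ⟨h, hd2⟩
    simp only [Set.mem_Ioc, neg_neg, not_and_or, not_lt, not_le] at hnc
    simp only [Set.mem_Ioc] at hd1
    set d := (x0 - (m:ℝ))/Real.sqrt N with hdd
    have hnumval : x0 - (m:ℝ) = ((k:ℝ) - m*N)/N := by
      rw [hx0def]; field_simp
    have hdj : d = (((k:ℤ) - m*(N:ℤ) : ℤ):ℝ) / ((N:ℝ) * Real.sqrt N) := by
      rw [hdd, hnumval, div_div]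
      push_cast
      ring
    have hjval : ((((k:ℤ) - m*(N:ℤ) : ℤ)):ℝ) = d * ((N:ℝ)*Real.sqrt N) := by
      rw [hdj]; field_simp
    have hEbound : E * ((N:ℝ)*Real.sqrt N) ≤ c * Real.sqrt N := by
      calc E * ((N:ℝ)*Real.sqrt N) ≤ (c/N) * ((N:ℝ)*Real.sqrt N) :=
            mul_le_mul_of_nonneg_right hEc hNN0.le
        _ = c * Real.sqrt N := by field_simp
    rcases hnc with hcase | hcase
    · -- d ≤ E : near 0
      have hub : ((((k:ℤ) - m*(N:ℤ) : ℤ)):ℝ) ≤ c * Real.sqrt N := by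
        rw [hjval]
        calc d * ((N:ℝ)*Real.sqrt N) ≤ E * ((N:ℝ)*Real.sqrt N) :=
              mul_le_mul_of_nonneg_right hcase hNN0.le
          _ ≤ c * Real.sqrt N := hEbound
      have hlb : -(c*Real.sqrt N) < ((((k:ℤ) - m*(N:ℤ) : ℤ)):ℝ) := by
        rw [hjval]
        have h1 := mul_lt_mul_of_pos_right hd1.1 hNN0
        nlinarith
      rw [hT]
      apply Finset.mem_union_left
      rw [Finset.mem_Ioc]
      exact ⟨Int.floor_lt.mpr hlb, Int.le_floor.mpr hub⟩
    · -- √s - E < d : near √s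
      have hub : ((((k:ℤ) - m*(N:ℤ) : ℤ)):ℝ) ≤ A + c * Real.sqrt N := by
        rw [hjval, hA]
        have h1 : d * ((N:ℝ)*Real.sqrt N) ≤ (Real.sqrt s + E) * ((N:ℝ)*Real.sqrt N) :=
          mul_le_mul_of_nonneg_right hd1.2 hNN0.le
        nlinarith
      have hlb : A - c * Real.sqrt N < ((((k:ℤ) - m*(N:ℤ) : ℤ)):ℝ) := by
        rw [hjval, hA]
        have h1 : (Real.sqrt s + -E) * ((N:ℝ)*Real.sqrt N) < d * ((N:ℝ)*Real.sqrt N) :=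
          mul_lt_mul_of_pos_right hcase hNN0
        nlinarith
      rw [hT]
      apply Finset.mem_union_right
      rw [Finset.mem_Ioc]
      exact ⟨Int.floor_lt.mpr hlb, Int.le_floor.mpr hub⟩
  -- injectivity: bad.card ≤ T.card
  have hcardT : bad.card ≤ T.card := by
    refine Finset.card_le_card_of_injOn
      (fun k : ℕ => if h : ∃ m : ℤ, (k:ℤ) - m * (N:ℤ) ∈ T then
        (k:ℤ) - (Classical.choose h) * (N:ℤ) else 0) ?_ ?_
    · intro k hk
      have hP := hPall k hk
      simp only [dif_pos hP]
      exact Classical.choose_spec hP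
    · intro k hk k' hk' hfe
      have hkb : k ∈ bad := hk
      have hkb' : k' ∈ bad := hk'
      have hP := hPall k hkb
      have hP' := hPall k' hkb'
      simp only [dif_pos hP, dif_pos hP'] at hfe
      have hdvd : (N:ℤ) ∣ ((k:ℤ) - (k':ℤ)) :=
        ⟨Classical.choose hP - Classical.choose hP', by linear_combination hfe⟩
      have hk1 := Finset.mem_Ico.mp (Finset.mem_filter.mp hkb).1
      have hk1' := Finset.mem_Ico.mp (Finset.mem_filter.mp hkb').1
      have hb1 : (1:ℤ) ≤ (k:ℤ) := by exact_mod_cast hk1.1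
      have hb2 : (k:ℤ) < (N:ℤ) := by exact_mod_cast hk1.2
      have hb3 : (1:ℤ) ≤ (k':ℤ) := by exact_mod_cast hk1'.1
      have hb4 : (k':ℤ) < (N:ℤ) := by exact_mod_cast hk1'.2
      have habs : |(k:ℤ) - (k':ℤ)| < (N:ℤ) := by
        rw [abs_lt]; constructor <;> linarith
      have hz := Int.eq_zero_of_abs_lt_dvd hdvd habs
      have : (k:ℤ) = (k':ℤ) := by linarith
      exact_mod_cast this
  -- size of T
  have hTbound : (T.card : ℝ) ≤ 4*c*Real.sqrt N + 2 := by
    have h1 : T.card ≤ (Finset.Ioc ⌊-(c*Real.sqrt N)⌋ ⌊c*Real.sqrt N⌋).card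
        + (Finset.Ioc ⌊A - c*Real.sqrt N⌋ ⌊A + c*Real.sqrt N⌋).card := by
      rw [hT]; exact Finset.card_union_le _ _
    have h2 : ((Finset.Ioc ⌊-(c*Real.sqrt N)⌋ ⌊c*Real.sqrt N⌋).card : ℝ)
        ≤ 2*c*Real.sqrt N + 1 := by
      have := card_Ioc_floor_le (show -(c*Real.sqrt N) ≤ c*Real.sqrt N by nlinarith)
      linarith
    have h3 : ((Finset.Ioc ⌊A - c*Real.sqrt N⌋ ⌊A + c*Real.sqrt N⌋).card : ℝ)
        ≤ 2*c*Real.sqrt N + 1 := by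
      have := card_Ioc_floor_le (show A - c*Real.sqrt N ≤ A + c*Real.sqrt N by nlinarith)
      linarith
    have h1' : (T.card : ℝ) ≤ ((Finset.Ioc ⌊-(c*Real.sqrt N)⌋ ⌊c*Real.sqrt N⌋).card : ℝ)
        + ((Finset.Ioc ⌊A - c*Real.sqrt N⌋ ⌊A + c*Real.sqrt N⌋).card : ℝ) := by
      exact_mod_cast h1
    linarith
  -- conclude
  have hbc : (bad.card : ℝ) ≤ 4*c*Real.sqrt N + 2 :=
    le_trans (by exact_mod_cast hcardT) hTbound
  have hNsq : Real.sqrt N * Real.sqrt N = (N:ℝ) := Real.mul_self_sqrt hN0.le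
  have hfinal : (4*c*Real.sqrt N + 2)/(N:ℝ) = 4*c*(Real.sqrt N)⁻¹ + 2*((N:ℝ))⁻¹ := by
    rw [div_eq_iff (ne_of_gt hN0)]
    have hi : (Real.sqrt N)⁻¹ * N = Real.sqrt N := by
      rw [inv_mul_eq_iff_eq_mul₀ (ne_of_gt hsqN0)]; exact hNsq.symm
    have hj : ((N:ℝ))⁻¹ * N = 1 := inv_mul_cancel₀ (ne_of_gt hN0)
    linear_combination (-(4*c)) * hi + (-2) * hj
  calc (bad.card : ℝ)/N ≤ (4*c*Real.sqrt N + 2)/(N:ℝ) := by gcongr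
    _ = 4*c*(Real.sqrt N)⁻¹ + 2*((N:ℝ))⁻¹ := hfinal
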